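/- arXiv:1404.2810 — 2 statements merged into one kernel-verified Lean document; each statement's English description precedes it below -/
import Mathlib

section
/- Let fᵢ ∈ C¹(S) for i = 1,…,n, λ(u) = min_i fᵢ(u), and ε > 0. Let u ∈ S and suppose y ∈ ℝⁿ, ‖y‖ = 1, satisfies ⟨∇fᵢ(u), y⟩ = c > 0 for all i ∈ N_ε(u), where N_ε(u) = {i : fᵢ(u) − λ(u) < ε}. Then there exists τ₀ > 0 such that λ(u + τy) > λ(u) for all τ ∈ (0, τ₀). -/
open Set

/-- If the unit vector y satisfies ⟨∇fᵢ(u), y⟩ = c > 0 for every i in the ε-active set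
N_ε(u), then λ(u + τy) > λ(u) for all sufficiently small τ > 0. -/
theorem stmt_13 (n : ℕ) (hn : 0 < n) (S : Set (Fin n → ℝ)) (hS : IsOpen S)
    (f : Fin n → (Fin n → ℝ) → ℝ)
    (hf : ∀ i, ContDiffOn ℝ 1 (f i) S)
    (lam : (Fin n → ℝ) → ℝ)
    (hlam : ∀ v, lam v = ⨅ i, f i v)
    (u : Fin n → ℝ) (hu : u ∈ S) (ε : ℝ) (hε : 0 < ε)
    (y : Fin n → ℝ) (hy : ‖y‖ = 1) (c : ℝ) (hc : 0 < c)
    (hgrad : ∀ i, f i u - lam u < ε → fderiv ℝ (f i) u y = c) :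
    ∃ τ₀ > 0, ∀ τ ∈ Ioo (0 : ℝ) τ₀, lam u < lam (u + τ • y) := by
  haveI : Nonempty (Fin n) := ⟨⟨0, hn⟩⟩
  have hdiff : ∀ i, DifferentiableAt ℝ (f i) u := fun i =>
    ((hf i).contDiffAt (hS.mem_nhds hu)).differentiableAt one_ne_zero
  have hlamle : ∀ i, lam u ≤ f i u := by
    intro i
    rw [hlam u]
    exact ciInf_le (Finite.bddBelow_range _) i
  -- for each i, find δ i > 0 with f i (u + τ • y) > lam u on (0, δ i)
  have key : ∀ i : Fin n, ∃ δ > 0, ∀ τ ∈ Ioo (0:ℝ) δ, lam u < f i (u + τ • y) := by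
    intro i
    by_cases hact : f i u - lam u < ε
    · -- active: use the derivative
      have hcurve : HasDerivAt (fun τ : ℝ => u + τ • y) y 0 := by
        simpa using ((hasDerivAt_id (0:ℝ)).smul_const y).const_add u
      have hD : HasDerivAt (fun τ : ℝ => f i (u + τ • y)) c 0 := by
        have hfd : HasFDerivAt (f i) (fderiv ℝ (f i) u) (u + (0:ℝ) • y) := by
          simpa using (hdiff i).hasFDerivAt
        have := hfd.comp_hasDerivAt 0 hcurve
        rw [hgrad i hact] at this
        exact this
      have hslope := hasDerivAt_iff_tendsto_slope.mp hD
      have hev : ∀ᶠ τ in nhdsWithin (0:ℝ) {0}ᶜ,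
          0 < slope (fun τ : ℝ => f i (u + τ • y)) 0 τ :=
        hslope.eventually_const_lt hc
      have hev' : ∀ᶠ τ in nhdsWithin (0:ℝ) (Ioi 0),
          0 < slope (fun τ : ℝ => f i (u + τ • y)) 0 τ :=
        hev.filter_mono (nhdsWithin_mono _ (fun x hx => ne_of_gt hx))
      obtain ⟨δ, hδ, hsub⟩ := mem_nhdsGT_iff_exists_Ioo_subset.mp hev'
      refine ⟨δ, hδ, fun τ hτ => ?_⟩
      have h0 := hsub hτ
      have hpos : 0 < (f i (u + τ • y) - f i (u + (0:ℝ) • y)) / (τ - 0) := by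
        simpa [slope_def_field, div_eq_iff, sub_ne_zero] using h0
      have : f i (u + (0:ℝ) • y) < f i (u + τ • y) := by
        have hτ0 : 0 < τ - 0 := by simpa using hτ.1
        rcases div_pos_iff.mp hpos with ⟨h1, _⟩ | ⟨_, h2⟩
        · linarith
        · linarith
      calc lam u ≤ f i u := hlamle i
        _ = f i (u + (0:ℝ) • y) := by simp
        _ < _ := this
    · -- inactive: continuity
      push_neg at hact
      have hcont : ContinuousAt (fun τ : ℝ => f i (u + τ • y)) 0 := by
        have h0 : ContinuousAt (f i) (u + (0:ℝ) • y) := by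
          simpa using (hdiff i).continuousAt
        have hc2 : ContinuousAt (fun τ : ℝ => u + τ • y) 0 := by fun_prop
        exact ContinuousAt.comp (g := f i) (f := fun τ : ℝ => u + τ • y) (x := 0) h0 hc2
      have hgt : lam u < f i (u + (0:ℝ) • y) := by
        simp only [zero_smul, add_zero]
        linarith
      have hev : ∀ᶠ τ in nhds (0:ℝ), lam u < f i (u + τ • y) :=
        hcont.eventually_const_lt hgt
      obtain ⟨δ, hδ, hsub⟩ := Metric.eventually_nhds_iff.mp hev
      refine ⟨δ, hδ, fun τ hτ => hsub ?_⟩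
      simp only [Real.dist_eq, sub_zero]
      rw [abs_of_pos hτ.1]
      exact hτ.2
  choose δ hδpos hδ using key
  obtain ⟨i₀, hi₀⟩ := Finite.exists_min δ
  refine ⟨δ i₀, hδpos i₀, fun τ hτ => ?_⟩
  obtain ⟨j, hj⟩ := exists_eq_ciInf_of_finite (f := fun i => f i (u + τ • y))
  rw [hlam (u + τ • y), ← hj]
  exact hδ j τ ⟨hτ.1, lt_of_lt_of_le hτ.2 (hi₀ j)⟩
end

section
/- Let v₁,…,v_N ∈ ℝⁿ and let Z = Nr conv{v₁,…,v_N} be the point of minimal Euclidean norm in the convex hull. Then for any unit vector d, min_i ⟨vᵢ, d⟩ ≤ ‖Z‖, and if Z ≠ 0 then equality holds for d = Z/‖Z‖, i.e. max_{‖d‖=1} min_i ⟨vᵢ, d⟩ = ‖Z‖. -/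
open scoped RealInnerProductSpace

/-- Demyanov–Malozemov: if Z is the minimal-norm point of conv{v₁,…,v_N}, then for every
unit vector d, min_i ⟨vᵢ, d⟩ ≤ ‖Z‖, with equality for d = Z/‖Z‖ when Z ≠ 0. -/
theorem stmt_16 (n N : ℕ) (hN : 0 < N) (v : Fin N → EuclideanSpace ℝ (Fin n))
    (Z : EuclideanSpace ℝ (Fin n))
    (hZmem : Z ∈ convexHull ℝ (Set.range v))
    (hZmin : ∀ w ∈ convexHull ℝ (Set.range v), ‖Z‖ ≤ ‖w‖) :
    (∀ d : EuclideanSpace ℝ (Fin n), ‖d‖ = 1 → (⨅ i, ⟪v i, d⟫) ≤ ‖Z‖) ∧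
      (Z ≠ 0 → (⨅ i, ⟪v i, ‖Z‖⁻¹ • Z⟫) = ‖Z‖) := by
  haveI : Nonempty (Fin N) := ⟨⟨0, hN⟩⟩
  set K := convexHull ℝ (Set.range v)
  -- variational inequality: ∀ w ∈ K, ⟪Z, w - Z⟫ ≥ 0
  have hvar : ∀ w ∈ K, (0 : ℝ) ≤ ⟪Z, w - Z⟫ := by
    have hK : Convex ℝ K := convex_convexHull ℝ _
    haveI : Nonempty K := ⟨⟨Z, hZmem⟩⟩
    have h : ‖(0 : EuclideanSpace ℝ (Fin n)) - Z‖ = ⨅ w : K, ‖(0 : EuclideanSpace ℝ (Fin n)) - w‖ := by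
      refine le_antisymm (le_ciInf fun w => ?_) ?_
      · simpa using hZmin w w.2
      · exact ciInf_le ⟨0, fun x hx => by rcases hx with ⟨w, rfl⟩; positivity⟩ (⟨Z, hZmem⟩ : K)
    have := (norm_eq_iInf_iff_real_inner_le_zero hK hZmem).mp h
    intro w hw
    have h2 := this w hw
    have : ⟪Z, w - Z⟫ = -⟪(0 : EuclideanSpace ℝ (Fin n)) - Z, w - Z⟫ := by
      rw [zero_sub, inner_neg_left]; ring
    rw [this]; linarith
  have hbdd : ∀ d : EuclideanSpace ℝ (Fin n), BddBelow (Set.range fun i => ⟪v i, d⟫) :=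
    fun d => (Set.finite_range _).bddBelow
  have part1 : ∀ d : EuclideanSpace ℝ (Fin n), ‖d‖ = 1 → (⨅ i, ⟪v i, d⟫) ≤ ‖Z‖ := by
    intro d hd
    set c : ℝ := ⨅ i, ⟪v i, d⟫
    have hc : c ≤ ⟪Z, d⟫ := by
      have hsub : K ⊆ {w : EuclideanSpace ℝ (Fin n) | c ≤ ⟪w, d⟫} := by
        apply convexHull_min
        · rintro _ ⟨i, rfl⟩
          exact ciInf_le (hbdd d) i
        · exact convex_halfSpace_ge
            ⟨fun x y => inner_add_left x y d, fun r x => real_inner_smul_left x d r⟩ c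
      exact hsub hZmem
    calc c ≤ ⟪Z, d⟫ := hc
      _ ≤ ‖Z‖ * ‖d‖ := real_inner_le_norm Z d
      _ = ‖Z‖ := by rw [hd, mul_one]
  refine ⟨part1, fun hZ => ?_⟩
  have hZn : (0 : ℝ) < ‖Z‖ := norm_pos_iff.mpr hZ
  have hdnorm : ‖(‖Z‖⁻¹ • Z : EuclideanSpace ℝ (Fin n))‖ = 1 := by
    rw [norm_smul, norm_inv, norm_norm, inv_mul_cancel₀ hZn.ne']
  refine le_antisymm (part1 _ hdnorm) (le_ciInf fun i => ?_)
  have hi : (0 : ℝ) ≤ ⟪Z, v i - Z⟫ := hvar (v i) (subset_convexHull ℝ _ ⟨i, rfl⟩)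
  have hZZ : ⟪Z, Z⟫ = ‖Z‖ ^ 2 := real_inner_self_eq_norm_sq Z
  have hiv : ‖Z‖ ^ 2 ≤ ⟪v i, Z⟫ := by
    rw [inner_sub_right] at hi
    rw [real_inner_comm]; linarith
  rw [real_inner_smul_right]
  rw [← mul_le_mul_iff_right₀ hZn]
  calc ‖Z‖ * ‖Z‖ = ‖Z‖ ^ 2 := (sq ‖Z‖).symm
    _ ≤ ⟪v i, Z⟫ := hiv
    _ = ‖Z‖ * (‖Z‖⁻¹ * ⟪v i, Z⟫) := by field_simp
end
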